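/- Let H be a bialgebra over a field k and M a left H-Hopf module (with action · and coaction ρ). Suppose T : M → M is a Hopf module map, i.e. T(h·m) = h·T(m) and ρ∘T = (id⊗T)∘ρ. Then for λ ∈ k the following are equivalent: (1) (M,T) is a generic Rota-Baxter paired H-Hopf module of weight λ, i.e. for every linear map P : H → H, (M,P,T) is both a Rota-Baxter paired left H-module of weight λ and a Rota-Baxter paired left H-comodule of weight λ; (2) there exists a linear map P : H → H such that (M,P,T) is both a Rota-Baxter paired left H-module of weight λ and a Rota-Baxter paired left H-comodule of weight λ; (3) T is quasi-idempotent of weight λ, i.e. T∘T = -λ·T. -/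

import Mathlib

open TensorProduct

/-- The Rota-Baxter paired left comodule condition of weight `lam`. -/
def RBPairedComodule {k C M : Type*} [Field k] [AddCommGroup C] [Module k C]
    [AddCommGroup M] [Module k M] (ρ : M →ₗ[k] C ⊗[k] M)
    (P : C →ₗ[k] C) (T : M →ₗ[k] M) (lam : k) : Prop :=
  TensorProduct.map P T ∘ₗ ρ =
    TensorProduct.map P LinearMap.id ∘ₗ ρ ∘ₗ T +
      TensorProduct.map LinearMap.id T ∘ₗ ρ ∘ₗ T + lam • (ρ ∘ₗ T)

/-- The Rota-Baxter paired left module condition of weight `lam`, with the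
left `H`-action given by `μ : H ⊗ M → M`:
`P(h)·T(m) = T(P(h)·m) + T(h·T(m)) + lam•T(h·m)`. -/
def RBPairedModule {k H M : Type*} [Field k] [Ring H] [Algebra k H]
    [AddCommGroup M] [Module k M] (μ : H ⊗[k] M →ₗ[k] M)
    (P : H →ₗ[k] H) (T : M →ₗ[k] M) (lam : k) : Prop :=
  ∀ (h : H) (m : M),
    μ (P h ⊗ₜ[k] T m) =
      T (μ (P h ⊗ₜ[k] m)) + T (μ (h ⊗ₜ[k] T m)) + lam • T (μ (h ⊗ₜ[k] m))

theorem stmt18 {k H M : Type*} [Field k] [Ring H] [Bialgebra k H]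
    [AddCommGroup M] [Module k M]
    -- `M` is a left `H`-module via `μ : H ⊗ M → M`:
    (μ : H ⊗[k] M →ₗ[k] M)
    (hμ1 : ∀ m : M, μ ((1 : H) ⊗ₜ[k] m) = m)
    (hμmul : ∀ (g h : H) (m : M), μ ((g * h) ⊗ₜ[k] m) = μ (g ⊗ₜ[k] μ (h ⊗ₜ[k] m)))
    -- `M` is a left `H`-comodule:
    (ρ : M →ₗ[k] H ⊗[k] M)
    (hcoassoc : (TensorProduct.assoc k H H M).toLinearMap ∘ₗ
        TensorProduct.map Coalgebra.comul LinearMap.id ∘ₗ ρ =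
        TensorProduct.map LinearMap.id ρ ∘ₗ ρ)
    (hcounit : (TensorProduct.lid k M).toLinearMap ∘ₗ
        TensorProduct.map Coalgebra.counit LinearMap.id ∘ₗ ρ = LinearMap.id)
    -- `M` is a left `H`-Hopf module: `ρ(h·m) = h₁m₋₁ ⊗ h₂·m₀`:
    (hhopf : ρ ∘ₗ μ =
      TensorProduct.map (LinearMap.mul' k H) μ ∘ₗ
        (TensorProduct.tensorTensorTensorComm k H H H M).toLinearMap ∘ₗ
          TensorProduct.map Coalgebra.comul ρ)
    -- `T` is a Hopf module map:
    (T : M →ₗ[k] M)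
    (hTmod : ∀ (h : H) (m : M), T (μ (h ⊗ₜ[k] m)) = μ (h ⊗ₜ[k] T m))
    (hTcol : ρ ∘ₗ T = TensorProduct.map LinearMap.id T ∘ₗ ρ)
    (lam : k) :
    List.TFAE [
      -- (1) `(M,T)` is a generic Rota-Baxter paired `H`-Hopf module of weight `lam`
      ∀ P : H →ₗ[k] H, RBPairedModule μ P T lam ∧ RBPairedComodule ρ P T lam,
      -- (2) there is some `P` making `(M,P,T)` a Rota-Baxter paired `H`-Hopf module
      ∃ P : H →ₗ[k] H, RBPairedModule μ P T lam ∧ RBPairedComodule ρ P T lam,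
      -- (3) `T` is quasi-idempotent of weight `lam`
      T ∘ₗ T = (-lam) • T] := by
  tfae_have 1 → 2 := fun h => ⟨0, h 0⟩
  tfae_have 2 → 3 := by
    rintro ⟨P, hmod, -⟩
    ext m
    have h := hmod 1 m
    rw [hTmod (P 1) m] at h
    simp only [hμ1] at h
    rw [add_assoc, left_eq_add] at h
    simp only [LinearMap.comp_apply, LinearMap.smul_apply, neg_smul]
    exact eq_neg_of_add_eq_zero_left h
  tfae_have 3 → 1 := by
    intro h3 P
    have hTT : ∀ x : M, T (T x) = -(lam • T x) := by
      intro x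
      have := congrArg (fun f => f x) h3
      simpa [neg_smul] using this
    constructor
    · intro h m
      rw [hTmod (P h) m, hTmod h (T m), hTT m]
      rw [show h ⊗ₜ[k] (-(lam • T m)) = -(lam • (h ⊗ₜ[k] T m)) by
        rw [TensorProduct.tmul_neg, TensorProduct.tmul_smul]]
      rw [hTmod h m]
      rw [map_neg, map_smul]
      abel
    · unfold RBPairedComodule
      rw [hTcol,
        ← LinearMap.comp_assoc ρ (TensorProduct.map LinearMap.id T) (TensorProduct.map P LinearMap.id),
        ← LinearMap.comp_assoc ρ (TensorProduct.map LinearMap.id T) (TensorProduct.map LinearMap.id T),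
        ← TensorProduct.map_comp, ← TensorProduct.map_comp, h3]
      simp only [LinearMap.comp_id, LinearMap.id_comp]
      have hms : TensorProduct.map (LinearMap.id : H →ₗ[k] H) ((-lam) • T)
          = (-lam) • TensorProduct.map LinearMap.id T := by
        ext h m
        simp only [TensorProduct.AlgebraTensorModule.curry_apply, LinearMap.coe_comp,
          LinearMap.coe_restrictScalars, Function.comp_apply, TensorProduct.curry_apply,
          TensorProduct.map_tmul, LinearMap.id_coe, id_eq, LinearMap.smul_apply]
        exact TensorProduct.tmul_smul _ _ _
      rw [hms]
      simp only [LinearMap.smul_comp]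
      module
  tfae_finish
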